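/- Let J_1, ..., J_r be anticommuting orthogonal complex structures on a real inner product space V, J = J_r, and for nonzero k ∈ ℤ^r let A be the operator on V ⊕ V given by A(X,Y) = 2π( k_r X - J(Σ_{l<r} k_l J_l) Y , J(Σ_{l<r} k_l J_l) X - k_r Y ). Then the operator norm of A^{-1} equals 1/(2π‖k‖). -/

import Mathlib

open scoped InnerProductSpace
open Real

theorem stmt4 {V : Type*} [NormedAddCommGroup V] [InnerProductSpace ℝ V]
    [FiniteDimensional ℝ V] [Nontrivial V] {m : ℕ} (J : Fin (m + 1) → (V →ₗ[ℝ] V))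
    (horth : ∀ l, ∀ x y : V, ⟪J l x, J l y⟫_ℝ = ⟪x, y⟫_ℝ)
    (hsq : ∀ l, J l ∘ₗ J l = -LinearMap.id)
    (hanti : ∀ l j, l ≠ j → J l ∘ₗ J j = -(J j ∘ₗ J l))
    (k : Fin (m + 1) → ℤ) (hk : k ≠ 0)
    (B : V →ₗ[ℝ] V)
    (hB : B = J (Fin.last m) ∘ₗ (∑ l : Fin m, ((k l.castSucc : ℝ) • J l.castSucc)))
    (A Ainv : WithLp 2 (V × V) →L[ℝ] WithLp 2 (V × V))
    (hA : ∀ X Y : V, A ((WithLp.equiv 2 (V × V)).symm (X, Y)) =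
      (WithLp.equiv 2 (V × V)).symm
        ((2 * π) • ((k (Fin.last m) : ℝ) • X - B Y),
         (2 * π) • (B X - (k (Fin.last m) : ℝ) • Y)))
    (h1 : Ainv.comp A = ContinuousLinearMap.id ℝ (WithLp 2 (V × V)))
    (h2 : A.comp Ainv = ContinuousLinearMap.id ℝ (WithLp 2 (V × V))) :
    ‖Ainv‖ = 1 / (2 * π * Real.sqrt (∑ l, (k l : ℝ) ^ 2)) := by
  classical
  set c : ℝ := (k (Fin.last m) : ℝ) with hc
  set μ : ℝ := ∑ l : Fin m, (k l.castSucc : ℝ) ^ 2 with hμ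
  -- pointwise versions of the hypotheses
  have hsq' : ∀ l (x : V), J l (J l x) = -x := by
    intro l x
    have := LinearMap.congr_fun (hsq l) x
    simpa using this
  have hanti' : ∀ l j, l ≠ j → ∀ x : V, J l (J j x) = -(J j (J l x)) := by
    intro l j hlj x
    have := LinearMap.congr_fun (hanti l j hlj) x
    simpa using this
  have hskew : ∀ l (x y : V), ⟪J l x, y⟫_ℝ = -⟪x, J l y⟫_ℝ := by
    intro l x y
    have h := horth l x (J l y)
    rw [hsq' l y, inner_neg_right] at h
    linarith
  have hcross : ∀ l j, l ≠ j → ∀ x : V, ⟪J l x, J j x⟫_ℝ = 0 := by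
    intro l j hlj x
    have h1 : ⟪J l x, J j x⟫_ℝ = -⟪x, J l (J j x)⟫_ℝ := hskew l x (J j x)
    rw [hanti' l j hlj x, inner_neg_right, neg_neg] at h1
    have h2' : ⟪x, J j (J l x)⟫_ℝ = ⟪J j (J l x), x⟫_ℝ := real_inner_comm _ _
    rw [hskew j (J l x) x] at h2'
    rw [h2', real_inner_comm] at h1
    linarith [real_inner_comm ((J l) x) ((J j) x), h1]
  have hlast : ∀ l : Fin m, l.castSucc ≠ Fin.last m := fun l =>
    (Fin.castSucc_lt_last l).ne
  -- expand B pointwise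
  have hBapp : ∀ x : V, B x =
      J (Fin.last m) (∑ l : Fin m, (k l.castSucc : ℝ) • J l.castSucc x) := by
    intro x
    rw [hB]
    simp [LinearMap.sum_apply, LinearMap.smul_apply]
  -- ⟪Bx, Bx⟫ = μ ⟪x,x⟫
  have hBB : ∀ x : V, ⟪B x, B x⟫_ℝ = μ * ⟪x, x⟫_ℝ := by
    intro x
    rw [hBapp, horth]
    rw [sum_inner]
    have : ∀ l : Fin m, l ∈ Finset.univ →
        ⟪(k l.castSucc : ℝ) • J l.castSucc x,
          ∑ j : Fin m, (k j.castSucc : ℝ) • J j.castSucc x⟫_ℝ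
        = (k l.castSucc : ℝ) ^ 2 * ⟪x, x⟫_ℝ := by
      intro l _
      rw [inner_sum]
      rw [Finset.sum_eq_single l]
      · rw [real_inner_smul_left, real_inner_smul_right, horth]
        ring
      · intro j _ hj
        rw [real_inner_smul_left, real_inner_smul_right,
          hcross l.castSucc j.castSucc (by
            simp [Fin.castSucc_inj, (Ne.symm hj)]) x]
        ring
      · intro h
        exact absurd (Finset.mem_univ l) h
    rw [Finset.sum_congr rfl this, ← Finset.sum_mul]
  -- B is skew-adjoint
  have hBskew : ∀ x y : V, ⟪B x, y⟫_ℝ = -⟪x, B y⟫_ℝ := by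
    intro x y
    rw [hBapp x, hBapp y]
    have e0 : ⟪x, J (Fin.last m) (∑ l : Fin m, (k l.castSucc : ℝ) • J l.castSucc y)⟫_ℝ
        = -⟪∑ l : Fin m, (k l.castSucc : ℝ) • J l.castSucc y, J (Fin.last m) x⟫_ℝ := by
      rw [real_inner_comm, hskew]
    rw [e0, hskew (Fin.last m), neg_neg]
    rw [sum_inner, sum_inner, ← Finset.sum_neg_distrib]
    refine Finset.sum_congr rfl fun l _ => ?_
    rw [real_inner_smul_left, real_inner_smul_left, ← mul_neg]
    congr 1
    have e1 := hskew l.castSucc y (J (Fin.last m) x)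
    rw [hanti' l.castSucc (Fin.last m) (hlast l) x, inner_neg_right, neg_neg] at e1
    have e2 : ⟪y, J (Fin.last m) (J l.castSucc x)⟫_ℝ
        = -⟪J l.castSucc x, J (Fin.last m) y⟫_ℝ := by
      rw [real_inner_comm, hskew]
    rw [e2] at e1
    linarith [e1]
  -- squared norm of A z
  have key : ∀ z : WithLp 2 (V × V),
      ⟪A z, A z⟫_ℝ = (2 * π) ^ 2 * (c ^ 2 + μ) * ⟪z, z⟫_ℝ := by
    intro z
    have hz : z = (WithLp.equiv 2 (V × V)).symm (z.fst, z.snd) := rfl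
    rw [hz, hA z.fst z.snd]
    set X := z.fst
    set Y := z.snd
    rw [WithLp.prod_inner_apply, WithLp.prod_inner_apply]
    simp only [WithLp.equiv_symm_apply, WithLp.toLp_fst, WithLp.toLp_snd]
    rw [real_inner_smul_left, real_inner_smul_left, real_inner_smul_right,
      real_inner_smul_right]
    have e1 : ⟪c • X - B Y, c • X - B Y⟫_ℝ
        = c ^ 2 * ⟪X, X⟫_ℝ - 2 * c * ⟪X, B Y⟫_ℝ + μ * ⟪Y, Y⟫_ℝ := by
      simp only [inner_sub_sub_self, real_inner_smul_left, real_inner_smul_right, hBB]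
      rw [real_inner_comm (B Y) X]
      ring
    have e2 : ⟪B X - c • Y, B X - c • Y⟫_ℝ
        = μ * ⟪X, X⟫_ℝ - 2 * c * ⟪B X, Y⟫_ℝ + c ^ 2 * ⟪Y, Y⟫_ℝ := by
      simp only [inner_sub_sub_self, real_inner_smul_left, real_inner_smul_right, hBB]
      rw [real_inner_comm Y (B X)]
      ring
    rw [e1, e2, hBskew X Y]
    ring
  -- positivity of the constant
  have hSpos : 0 < ∑ l, (k l : ℝ) ^ 2 := by
    obtain ⟨l, hl⟩ : ∃ l, k l ≠ 0 := by
      by_contra h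
      push_neg at h
      exact hk (funext h)
    refine Finset.sum_pos' (fun j _ => sq_nonneg _) ⟨l, Finset.mem_univ l, ?_⟩
    have : (k l : ℝ) ≠ 0 := Int.cast_ne_zero.mpr hl
    positivity
  set C : ℝ := 2 * π * Real.sqrt (∑ l, (k l : ℝ) ^ 2) with hC
  have hCpos : 0 < C := by
    have h1 := Real.pi_pos
    have h2 := Real.sqrt_pos.mpr hSpos
    positivity
  have hSmu : ∑ l, (k l : ℝ) ^ 2 = c ^ 2 + μ := by
    rw [Fin.sum_univ_castSucc]
    ring
  have hC2 : C ^ 2 = (2 * π) ^ 2 * (c ^ 2 + μ) := by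
    rw [hC, mul_pow, Real.sq_sqrt hSpos.le, hSmu]
  -- A scales norms by C
  have hAnorm : ∀ z : WithLp 2 (V × V), ‖A z‖ = C * ‖z‖ := by
    intro z
    have h := key z
    rw [real_inner_self_eq_norm_sq, real_inner_self_eq_norm_sq, ← hC2] at h
    have h' : ‖A z‖ ^ 2 = (C * ‖z‖) ^ 2 := by rw [h]; ring
    calc ‖A z‖ = Real.sqrt (‖A z‖ ^ 2) := (Real.sqrt_sq (norm_nonneg _)).symm
    _ = Real.sqrt ((C * ‖z‖) ^ 2) := by rw [h']
    _ = C * ‖z‖ := Real.sqrt_sq (by positivity)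
  -- Ainv scales norms by C⁻¹
  have hinv : ∀ w : WithLp 2 (V × V), ‖Ainv w‖ = C⁻¹ * ‖w‖ := by
    intro w
    have hw : A (Ainv w) = w := by
      have := DFunLike.congr_fun h2 w
      simpa using this
    have h := hAnorm (Ainv w)
    rw [hw] at h
    rw [h, inv_mul_cancel_left₀ hCpos.ne']
  rw [one_div]
  apply ContinuousLinearMap.opNorm_eq_of_bounds (by positivity)
  · intro x
    exact (hinv x).le
  · intro N hN hbound
    obtain ⟨v, hv⟩ := exists_ne (0 : V)
    set z := (WithLp.equiv 2 (V × V)).symm (v, 0) with hzdef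
    have hzn : ‖z‖ ^ 2 = ‖v‖ ^ 2 := by
      rw [← real_inner_self_eq_norm_sq, ← real_inner_self_eq_norm_sq,
        WithLp.prod_inner_apply]
      simp [hzdef]
    have hvpos : 0 < ‖v‖ := norm_pos_iff.mpr hv
    have hzpos : 0 < ‖z‖ := by nlinarith [norm_nonneg z]
    have hb := hbound z
    rw [hinv z] at hb
    exact le_of_mul_le_mul_right hb hzpos
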